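/- For the generalized Bernoulli-Laplace chain with n balls, r red balls, left urn size m, and swap size k, the function s1(x) = 1 - (n/(r m)) x is a right eigenfunction of the transition kernel with eigenvalue λ1 = 1 - n k / (m (n - m)); that is, if X1 = x - H1 + H2 with H1 ~ Hyp(m, x, k) and H2 ~ Hyp(n-m, r-x, k) independent, then E[s1(X1)] = λ1 · s1(x). -/

import Mathlib

open MeasureTheory

/-- `s1(x) = 1 - (n/(rm))x` is a right eigenfunction of the generalized
Bernoulli-Laplace transition kernel with eigenvalue `λ1 = 1 - nk/(m(n-m))`. -/
theorem bl_s1_eigenfunction {Ω : Type*} [MeasurableSpace Ω]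
    (μ : Measure Ω) [IsProbabilityMeasure μ]
    (n m r k : ℕ) (hr : 0 < r) (hm : 0 < m) (hmn : m < n) (hk : k ≤ m) (hm2 : 2 * m ≤ n)
    (x : ℝ) (H1 H2 : Ω → ℝ)
    (hH1 : Integrable H1 μ) (hH2 : Integrable H2 μ)
    (hEH1 : ∫ ω, H1 ω ∂μ = (k : ℝ) * x / m)
    (hEH2 : ∫ ω, H2 ω ∂μ = (k : ℝ) * ((r : ℝ) - x) / ((n : ℝ) - m)) :
    ∫ ω, (1 - (n : ℝ) / ((r : ℝ) * m) * (x - H1 ω + H2 ω)) ∂μ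
      = (1 - (n : ℝ) * k / ((m : ℝ) * ((n : ℝ) - m))) * (1 - (n : ℝ) / ((r : ℝ) * m) * x) := by
  have hrm : (r : ℝ) * m ≠ 0 := by positivity
  have hm0 : (m : ℝ) ≠ 0 := by positivity
  have hnm : (n : ℝ) - m ≠ 0 := by
    have : (m : ℝ) < n := by exact_mod_cast hmn
    linarith
  have h1 : ∀ ω, (1 - (n : ℝ) / ((r : ℝ) * m) * (x - H1 ω + H2 ω))
      = (1 - (n : ℝ) / ((r : ℝ) * m) * x) + ((n : ℝ) / ((r : ℝ) * m)) * H1 ω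
        - ((n : ℝ) / ((r : ℝ) * m)) * H2 ω := by
    intro ω; ring
  simp_rw [h1]
  rw [integral_sub (by exact (integrable_const _).add (hH1.const_mul _)) (hH2.const_mul _),
    integral_add (integrable_const _) (hH1.const_mul _), integral_const,
    integral_const_mul, integral_const_mul, hEH1, hEH2]
  simp only [measure_univ, probReal_univ, ENNReal.toReal_one, smul_eq_mul, one_mul]
  field_simp
  ring
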